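/- arXiv:1809.03089 — 3 statements merged into one kernel-verified Lean document; each statement's English description precedes it below -/
import Mathlib

section
/- Every degree-one function f on the multislice M_κ has a representation f = c + Σ_{j=1}^n Σ_{i=1}^ℓ c_{ji} x_{ji} in which Σ_{i=1}^ℓ c_{ji} = 0 for every j ∈ [n] and Σ_{j=1}^n c_{ji} = 0 for every i ∈ [ℓ], and this representation is unique: if two families of coefficients satisfying these constraints represent the same function on M_κ, then they are equal (including the constant terms). -/
open Finset

noncomputable section

/-- The multislice: vectors in `[ℓ]^n` whose colour counts are given by `κ`. -/
def multislice (ℓ n : ℕ) (κ : Fin ℓ → ℕ) : Finset (Fin n → Fin ℓ) :=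
  Finset.univ.filter fun u => ∀ i, (Finset.univ.filter fun j => u j = i).card = κ i

/-- Expectation with respect to the uniform measure on the multislice. -/
def msExp (ℓ n : ℕ) (κ : Fin ℓ → ℕ) (f : (Fin n → Fin ℓ) → ℝ) : ℝ :=
  (∑ u ∈ multislice ℓ n κ, f u) / ((multislice ℓ n κ).card : ℝ)

/-- The indicator variable `x_{ji}`. -/
def xvar (ℓ n : ℕ) (j : Fin n) (i : Fin ℓ) (u : Fin n → Fin ℓ) : ℝ :=
  if u j = i then 1 else 0

/-- A function on the multislice has degree one if it is of the form
`c + ∑_j ∑_i c_{ji} x_{ji}`. -/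
def degreeOne (ℓ n : ℕ) (κ : Fin ℓ → ℕ) (f : (Fin n → Fin ℓ) → ℝ) : Prop :=
  ∃ (c : ℝ) (coef : Fin n → Fin ℓ → ℝ), ∀ u ∈ multislice ℓ n κ,
    f u = c + ∑ j, ∑ i, coef j i * xvar ℓ n j i u

/-- Distance of a real number to the set `{0,1}`. -/
def dist01 (x : ℝ) : ℝ := min |x| |x - 1|

/-- A function is Boolean on the multislice if it takes values in `{0,1}` there. -/
def booleanOn (ℓ n : ℕ) (κ : Fin ℓ → ℕ) (g : (Fin n → Fin ℓ) → ℝ) : Prop :=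
  ∀ u ∈ multislice ℓ n κ, g u = 0 ∨ g u = 1

/-- A dictator: a function depending on at most one coordinate. -/
def dictator (ℓ n : ℕ) (κ : Fin ℓ → ℕ) (g : (Fin n → Fin ℓ) → ℝ) : Prop :=
  ∃ j : Fin n, ∀ u ∈ multislice ℓ n κ, ∀ v ∈ multislice ℓ n κ, u j = v j → g u = g v

lemma count_get {α : Type*} [DecidableEq α] (L : List α) (a : α) :
    (Finset.univ.filter fun j : Fin L.length => L.get j = a).card = L.count a := by
  rw [Finset.card_filter]
  induction L with
  | nil => simp
  | cons b t ih =>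
      show (∑ i : Fin (t.length + 1), if (b :: t).get i = a then (1:ℕ) else 0) = _
      rw [Fin.sum_univ_succ]
      show (if b = a then (1:ℕ) else 0) + ∑ i : Fin t.length, (if t.get i = a then (1:ℕ) else 0) = _
      rw [ih, List.count_cons]
      by_cases h : b = a <;> simp [h, Nat.add_comm]

lemma multislice_nonempty (ℓ n : ℕ) (κ : Fin ℓ → ℕ) (hsum : ∑ i, κ i = n) :
    (multislice ℓ n κ).Nonempty := by
  set L := (List.finRange ℓ).flatMap fun i => List.replicate (κ i) i with hL
  have hlen : L.length = n := by
    rw [hL, List.length_flatMap, ← hsum, Fin.sum_univ_def]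
    congr 1
    exact List.map_congr_left fun i _ => by simp
  refine ⟨fun j => L.get (Fin.cast hlen.symm j), ?_⟩
  simp only [multislice, mem_filter, mem_univ, true_and]
  intro i
  have hcount : L.count i = κ i := by
    rw [hL, List.count_flatMap]
    calc ((List.finRange ℓ).map fun i' => (List.replicate (κ i') i').count i).sum
        = ((List.finRange ℓ).map fun i' => if i' = i then κ i' else 0).sum := by
          congr 1
          exact List.map_congr_left fun i' _ => by
            rw [List.count_replicate]; by_cases h : i' = i <;> simp [h]
      _ = ∑ i' : Fin ℓ, if i' = i then κ i' else 0 := (Fin.sum_univ_def _).symm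
      _ = κ i := by simp
  rw [← hcount, ← count_get]
  apply Finset.card_nbij' (Fin.cast hlen.symm) (Fin.cast hlen) <;>
    simp [Set.MapsTo, Set.LeftInvOn, Set.RightInvOn, Fin.ext_iff]

lemma comp_mem_multislice {ℓ n : ℕ} {κ : Fin ℓ → ℕ} {u : Fin n → Fin ℓ}
    (hu : u ∈ multislice ℓ n κ) (σ : Equiv.Perm (Fin n)) : (u ∘ σ) ∈ multislice ℓ n κ := by
  simp only [multislice, mem_filter, mem_univ, true_and] at hu ⊢
  intro i
  rw [← hu i]
  apply Finset.card_nbij' σ σ.symm <;> simp [Set.MapsTo, Set.LeftInvOn, Set.RightInvOn, Function.comp]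

lemma exists_mem_multislice (ℓ n : ℕ) (κ : Fin ℓ → ℕ) (hκ : ∀ i, 0 < κ i)
    (hsum : ∑ i, κ i = n) {j j' : Fin n} (hjj : j ≠ j') {i i' : Fin ℓ} (hii : i ≠ i') :
    ∃ u ∈ multislice ℓ n κ, u j = i ∧ u j' = i' := by
  obtain ⟨u0, hu0⟩ := multislice_nonempty ℓ n κ hsum
  have h0 := (Finset.mem_filter.mp hu0).2
  obtain ⟨j1, hj1⟩ : (Finset.univ.filter fun j => u0 j = i).Nonempty := by
    rw [← Finset.card_pos, h0 i]; exact hκ i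
  obtain ⟨j2, hj2⟩ : (Finset.univ.filter fun j => u0 j = i').Nonempty := by
    rw [← Finset.card_pos, h0 i']; exact hκ i'
  have hj1' : u0 j1 = i := (Finset.mem_filter.mp hj1).2
  have hj2'' : u0 j2 = i' := (Finset.mem_filter.mp hj2).2
  have hj12 : j1 ≠ j2 := fun h => hii (by rw [← hj1', h, hj2''])
  set τ := Equiv.swap j j1 with hτ
  set j2' := τ.symm j2 with hj2'def
  have hj2j : j2' ≠ j := by
    intro h
    have : j2 = τ j := by rw [← h, hj2'def]; simp
    rw [Equiv.swap_apply_left] at this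
    exact hj12 this.symm
  set σ := (Equiv.swap j' j2').trans τ with hσ
  refine ⟨u0 ∘ σ, comp_mem_multislice hu0 σ, ?_, ?_⟩
  · show u0 (σ j) = i
    have : σ j = j1 := by
      rw [hσ]
      simp only [Equiv.trans_apply]
      rw [Equiv.swap_apply_of_ne_of_ne hjj hj2j.symm, hτ, Equiv.swap_apply_left]
    rw [this, hj1']
  · show u0 (σ j') = i'
    have : σ j' = j2 := by
      rw [hσ]
      simp only [Equiv.trans_apply, Equiv.swap_apply_left]
      rw [hj2'def]; simp
    rw [this, hj2'']

lemma sum_xvar_mul (ℓ n : ℕ) (j : Fin n) (u : Fin n → Fin ℓ) (c : Fin ℓ → ℝ) :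
    ∑ i, c i * xvar ℓ n j i u = c (u j) := by
  simp only [xvar, mul_ite, mul_one, mul_zero]
  rw [Finset.sum_ite_eq]
  simp

lemma sum_xvar {ℓ n : ℕ} {κ : Fin ℓ → ℕ} {u : Fin n → Fin ℓ}
    (hu : u ∈ multislice ℓ n κ) (i : Fin ℓ) : ∑ j, xvar ℓ n j i u = (κ i : ℝ) := by
  simp only [xvar]
  rw [Finset.sum_boole, (Finset.mem_filter.mp hu).2 i]

lemma exists_normalized (ℓ n : ℕ) (hℓ : 0 < ℓ) (hn : 0 < n) (κ : Fin ℓ → ℕ)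
    (c : ℝ) (coef : Fin n → Fin ℓ → ℝ) :
    ∃ (c' : ℝ) (coef' : Fin n → Fin ℓ → ℝ),
      (∀ j, ∑ i, coef' j i = 0) ∧ (∀ i, ∑ j, coef' j i = 0) ∧
      ∀ u ∈ multislice ℓ n κ,
        c + ∑ j, ∑ i, coef j i * xvar ℓ n j i u
          = c' + ∑ j, ∑ i, coef' j i * xvar ℓ n j i u := by
  have hℓ0 : (ℓ : ℝ) ≠ 0 := Nat.cast_ne_zero.mpr hℓ.ne'
  have hn0 : (n : ℝ) ≠ 0 := Nat.cast_ne_zero.mpr hn.ne'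
  set r : Fin n → ℝ := fun j => (∑ i, coef j i) / ℓ with hr
  set s : Fin ℓ → ℝ := fun i => (∑ j, coef j i) / n with hs
  set t : ℝ := (∑ j, ∑ i, coef j i) / (n * ℓ) with ht
  have hsumr : ∑ j, r j = n * t := by
    rw [hr, ht]; simp only []
    rw [← Finset.sum_div]
    field_simp
  have hsums : ∑ i, s i = ℓ * t := by
    rw [hs, ht]; simp only []
    rw [← Finset.sum_div, Finset.sum_comm]
    field_simp
  refine ⟨c + ∑ j, r j + ∑ i, s i * (κ i : ℝ) - t * n,
    fun j i => coef j i - r j - s i + t, ?_, ?_, ?_⟩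
  · intro j
    have : ∑ i, (coef j i - r j - s i + t)
        = (∑ i, coef j i) - ℓ * r j - (∑ i, s i) + ℓ * t := by
      rw [Finset.sum_add_distrib, Finset.sum_sub_distrib, Finset.sum_sub_distrib,
        Finset.sum_const, Finset.sum_const, Finset.card_univ, Fintype.card_fin,
        nsmul_eq_mul, nsmul_eq_mul]
    rw [this, hsums]
    have : (ℓ : ℝ) * r j = ∑ i, coef j i := by rw [hr]; field_simp
    rw [this]; ring
  · intro i
    have : ∑ j, (coef j i - r j - s i + t)
        = (∑ j, coef j i) - (∑ j, r j) - n * s i + n * t := by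
      rw [Finset.sum_add_distrib, Finset.sum_sub_distrib, Finset.sum_sub_distrib,
        Finset.sum_const, Finset.sum_const, Finset.card_univ, Fintype.card_fin,
        nsmul_eq_mul, nsmul_eq_mul]
    rw [this, hsumr]
    have : (n : ℝ) * s i = ∑ j, coef j i := by rw [hs]; field_simp
    rw [this]; ring
  · intro u hu
    have key : ∀ d : Fin n → Fin ℓ → ℝ,
        ∑ j, ∑ i, d j i * xvar ℓ n j i u = ∑ j, d j (u j) := by
      intro d; exact Finset.sum_congr rfl fun j _ => sum_xvar_mul ℓ n j u (d j)
    rw [key, key]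
    have hsplit : ∑ j, (coef j (u j) - r j - s (u j) + t)
        = (∑ j, coef j (u j)) - (∑ j, r j) - (∑ j, s (u j)) + n * t := by
      rw [Finset.sum_add_distrib, Finset.sum_sub_distrib, Finset.sum_sub_distrib,
        Finset.sum_const, Finset.card_univ, Fintype.card_fin, nsmul_eq_mul]
    rw [hsplit]
    have hsu : ∑ j, s (u j) = ∑ i, s i * (κ i : ℝ) := by
      have : ∀ j, s (u j) = ∑ i, s i * xvar ℓ n j i u :=
        fun j => (sum_xvar_mul ℓ n j u s).symm
      rw [Finset.sum_congr rfl fun j _ => this j, Finset.sum_comm]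
      exact Finset.sum_congr rfl fun i _ => by rw [← Finset.mul_sum, sum_xvar hu]
    rw [hsu]
    ring

lemma normalized_unique (ℓ n : ℕ) (hℓ : 2 ≤ ℓ) (hn : 2 ≤ n) (κ : Fin ℓ → ℕ)
    (hκ : ∀ i, 0 < κ i) (hsum : ∑ i, κ i = n) (δ : ℝ) (d : Fin n → Fin ℓ → ℝ)
    (hrow : ∀ j, ∑ i, d j i = 0) (hcol : ∀ i, ∑ j, d j i = 0)
    (hrep : ∀ u ∈ multislice ℓ n κ, δ + ∑ j, d j (u j) = 0) :
    δ = 0 ∧ ∀ j i, d j i = 0 := by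
  have hℓ0 : (ℓ : ℝ) ≠ 0 := Nat.cast_ne_zero.mpr (by omega)
  have hn0 : (n : ℝ) ≠ 0 := Nat.cast_ne_zero.mpr (by omega)
  have rect : ∀ j j' : Fin n, j ≠ j' → ∀ i i' : Fin ℓ,
      d j i + d j' i' = d j i' + d j' i := by
    intro j j' hjj i i'
    by_cases hii : i = i'
    · subst hii; ring
    · obtain ⟨u, hu, huj, huj'⟩ := exists_mem_multislice ℓ n κ hκ hsum hjj hii
      have hu' := comp_mem_multislice hu (Equiv.swap j j')
      have e1 := hrep u hu
      have e2 := hrep _ hu'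
      simp only [Function.comp] at e2
      have hzero : ∑ j'' , (d j'' (u j'') - d j'' (u (Equiv.swap j j' j''))) = 0 := by
        rw [Finset.sum_sub_distrib]
        linarith
      have hsup : ∑ j'' ∈ ({j, j'} : Finset (Fin n)),
          (d j'' (u j'') - d j'' (u (Equiv.swap j j' j''))) = 0 := by
        rw [Finset.sum_subset (Finset.subset_univ ({j, j'} : Finset (Fin n)))
          (fun x _ hx => ?_)]
        · exact hzero
        · have hxj : x ≠ j := fun h => hx (by simp [h])
          have hxj' : x ≠ j' := fun h => hx (by simp [h])
          rw [Equiv.swap_apply_of_ne_of_ne hxj hxj']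
          ring
      rw [Finset.sum_pair hjj, Equiv.swap_apply_left, Equiv.swap_apply_right,
        huj, huj'] at hsup
      linarith
  set j0 : Fin n := ⟨0, by omega⟩ with hj0
  set i0 : Fin ℓ := ⟨0, by omega⟩ with hi0
  have hstar : ∀ j i, d j i = d j i0 + d j0 i - d j0 i0 := by
    intro j i
    by_cases hj : j = j0
    · subst hj; ring
    · have h := rect j j0 hj i i0
      linarith
  have h1 : ∀ j, d j i0 = d j0 i0 := by
    intro j
    have h := hrow j
    rw [Finset.sum_congr rfl fun i _ => hstar j i] at h
    rw [Finset.sum_sub_distrib, Finset.sum_add_distrib, Finset.sum_const,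
      Finset.sum_const, Finset.card_univ, Fintype.card_fin, nsmul_eq_mul,
      nsmul_eq_mul, hrow j0] at h
    have hz : (ℓ : ℝ) * (d j i0 - d j0 i0) = 0 := by linarith
    have := (mul_eq_zero.mp hz).resolve_left hℓ0
    linarith
  have h2 : d j0 i0 = 0 := by
    have h := hcol i0
    rw [Finset.sum_congr rfl fun j _ => h1 j, Finset.sum_const, Finset.card_univ,
      Fintype.card_fin, nsmul_eq_mul] at h
    exact (mul_eq_zero.mp h).resolve_left hn0
  have h3 : ∀ i, d j0 i = 0 := by
    intro i
    have h := hcol i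
    have heq : ∀ j, d j i = d j0 i := by
      intro j; rw [hstar j i, h1 j, h2]; ring
    rw [Finset.sum_congr rfl fun j _ => heq j, Finset.sum_const, Finset.card_univ,
      Fintype.card_fin, nsmul_eq_mul] at h
    exact (mul_eq_zero.mp h).resolve_left hn0
  have hd : ∀ j i, d j i = 0 := by
    intro j i; rw [hstar j i, h1 j, h2, h3 i]; ring
  refine ⟨?_, hd⟩
  obtain ⟨u, hu⟩ := multislice_nonempty ℓ n κ hsum
  have h := hrep u hu
  rw [Finset.sum_congr rfl fun j _ => hd j (u j)] at h
  simpa using h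

/-- **Normal form for degree-one functions.**  Every degree-one function on the multislice has a
unique representation `f = c + ∑_j ∑_i c_{ji} x_{ji}` with all row sums `∑_i c_{ji}` and all
column sums `∑_j c_{ji}` equal to zero. -/
theorem degreeOne_normal_form (ℓ n : ℕ) (hℓ : 2 ≤ ℓ) (hn : 2 ≤ n) (κ : Fin ℓ → ℕ)
    (hκ : ∀ i, 0 < κ i) (hsum : ∑ i, κ i = n) (f : (Fin n → Fin ℓ) → ℝ)
    (hf : degreeOne ℓ n κ f) :
    ∃! p : ℝ × (Fin n → Fin ℓ → ℝ),
      (∀ j, ∑ i, p.2 j i = 0) ∧ (∀ i, ∑ j, p.2 j i = 0) ∧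
      ∀ u ∈ multislice ℓ n κ, f u = p.1 + ∑ j, ∑ i, p.2 j i * xvar ℓ n j i u := by
  obtain ⟨c, coef, hfc⟩ := hf
  obtain ⟨c', coef', hrow, hcol, hrep⟩ :=
    exists_normalized ℓ n (by omega) (by omega) κ c coef
  refine ⟨(c', coef'), ⟨hrow, hcol, fun u hu => ?_⟩, ?_⟩
  · rw [hfc u hu]; exact hrep u hu
  · rintro ⟨q1, q2⟩ ⟨hq1, hq2, hq3⟩
    have hrep2 : ∀ u ∈ multislice ℓ n κ,
        q1 - c' + ∑ j, (q2 j (u j) - coef' j (u j)) = 0 := by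
      intro u hu
      have e1 := hq3 u hu
      have e2 : f u = c' + ∑ j, ∑ i, coef' j i * xvar ℓ n j i u := by
        rw [hfc u hu]; exact hrep u hu
      have key2 : ∀ dd : Fin n → Fin ℓ → ℝ,
          ∑ j, ∑ i, dd j i * xvar ℓ n j i u = ∑ j, dd j (u j) :=
        fun dd => Finset.sum_congr rfl fun j _ => sum_xvar_mul ℓ n j u (dd j)
      rw [key2] at e1 e2
      rw [Finset.sum_sub_distrib]
      simp only [] at e1
      linarith
    have key := normalized_unique ℓ n hℓ hn κ hκ hsum (q1 - c')
      (fun j i => q2 j i - coef' j i)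
      (fun j => by
        show ∑ i, (q2 j i - coef' j i) = 0
        rw [Finset.sum_sub_distrib]
        have h1 := hq1 j
        simp only [] at h1
        rw [h1, hrow j]; ring)
      (fun i => by
        show ∑ j, (q2 j i - coef' j i) = 0
        rw [Finset.sum_sub_distrib]
        have h2 := hq2 i
        simp only [] at h2
        rw [h2, hcol i]; ring)
      hrep2
    obtain ⟨hδ, hd⟩ := key
    have hq2e : q2 = coef' := by
      funext j i
      have h := hd j i
      simp only [sub_eq_zero] at h
      exact h
    have hq1e : q1 = c' := by linarith
    rw [Prod.ext_iff]
    exact ⟨hq1e, hq2e⟩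
end
end

section
/- Fix an integer ℓ ≥ 2 and a parameter ρ > 0. There exists a constant C = C(ℓ,ρ) such that the following holds for every ρ-balanced multislice M_κ on n points and ℓ colours. Suppose f : M_κ → ℝ is written as f = c + Σ_{j=1}^n Σ_{i=1}^{ℓ−1} c_{ji} x_{ji} (with the variables of the last colour ℓ eliminated) and satisfies E[dist(f,{0,1})²] = ε. Then for all distinct coordinates j_1 ≠ j_2 and every colour i ∈ [ℓ−1], dist(c_{j_1 i} − c_{j_2 i}, {−1,0,1}) ≤ C√ε. -/
open Finset

noncomputable section

/-- Distance of a real number to the set `{-1, 0, 1}`. -/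
def distPM1 (x : ℝ) : ℝ := min |x| (min |x - 1| |x + 1|)

/-! ### Auxiliary lemmas -/

lemma ms_count {ℓ n : ℕ} {κ : Fin ℓ → ℕ} {u : Fin n → Fin ℓ}
    (hu : u ∈ multislice ℓ n κ) (i : Fin ℓ) :
    (Finset.univ.filter fun j => u j = i).card = κ i :=
  (Finset.mem_filter.1 hu).2 i

lemma mem_ms_comp {ℓ n : ℕ} {κ : Fin ℓ → ℕ} (σ : Equiv.Perm (Fin n))
    {u : Fin n → Fin ℓ} (hu : u ∈ multislice ℓ n κ) : u ∘ σ ∈ multislice ℓ n κ := by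
  simp only [multislice, mem_filter, mem_univ, true_and] at hu ⊢
  intro i
  rw [← hu i]
  exact Finset.card_equiv σ (by simp [Function.comp])

lemma sum_ms_comp {ℓ n : ℕ} {κ : Fin ℓ → ℕ} (σ : Equiv.Perm (Fin n))
    (p : (Fin n → Fin ℓ) → Prop) [DecidablePred p] (g : (Fin n → Fin ℓ) → ℝ) :
    ∑ u ∈ (multislice ℓ n κ).filter (fun u => p (u ∘ σ)), g (u ∘ σ)
      = ∑ v ∈ (multislice ℓ n κ).filter p, g v := by
  apply Finset.sum_nbij' (i := fun u => u ∘ σ) (j := fun v => v ∘ σ.symm)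
  · intro u hu
    simp only [mem_filter] at hu ⊢
    exact ⟨mem_ms_comp σ hu.1, hu.2⟩
  · intro v hv
    simp only [mem_filter] at hv ⊢
    refine ⟨mem_ms_comp σ.symm hv.1, ?_⟩
    have : v ∘ ⇑σ.symm ∘ ⇑σ = v := by ext j; simp
    rw [Function.comp_assoc, this]; exact hv.2
  · intro u _; ext j; simp
  · intro v _; ext j; simp
  · intro u _; rfl

lemma card_ms_comp {ℓ n : ℕ} {κ : Fin ℓ → ℕ} (σ : Equiv.Perm (Fin n))
    (p : (Fin n → Fin ℓ) → Prop) [DecidablePred p] :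
    ((multislice ℓ n κ).filter (fun u => p (u ∘ σ))).card
      = ((multislice ℓ n κ).filter p).card := by
  apply Finset.card_nbij' (i := fun u => u ∘ σ) (j := fun v => v ∘ σ.symm)
  · intro u hu
    simp only [Finset.coe_filter, Set.mem_setOf_eq, Finset.mem_coe, mem_filter] at hu ⊢
    exact ⟨mem_ms_comp σ hu.1, hu.2⟩
  · intro v hv
    simp only [Finset.coe_filter, Set.mem_setOf_eq, Finset.mem_coe, mem_filter] at hv ⊢
    refine ⟨mem_ms_comp σ.symm hv.1, ?_⟩
    have : v ∘ ⇑σ.symm ∘ ⇑σ = v := by ext j; simp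
    rw [Function.comp_assoc, this]; exact hv.2
  · intro u _; ext j; simp
  · intro v _; ext j; simp

lemma fiber1 {ℓ n : ℕ} {κ : Fin ℓ → ℕ} (j : Fin n) (a : Fin ℓ) :
    n * ((multislice ℓ n κ).filter fun u => u j = a).card
      = κ a * (multislice ℓ n κ).card := by
  have key : ∀ j' : Fin n, ((multislice ℓ n κ).filter fun u => u j' = a).card
      = ((multislice ℓ n κ).filter fun u => u j = a).card := by
    intro j'
    have h := card_ms_comp (κ := κ) (Equiv.swap j j') (fun u => u j = a)
    simpa [Function.comp, Equiv.swap_apply_left] using h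
  calc n * ((multislice ℓ n κ).filter fun u => u j = a).card
      = ∑ j' : Fin n, ((multislice ℓ n κ).filter fun u => u j' = a).card := by
        rw [Finset.sum_congr rfl fun j' _ => key j', Finset.sum_const, Finset.card_univ,
          Fintype.card_fin, smul_eq_mul]
    _ = ∑ j' : Fin n, ∑ u ∈ multislice ℓ n κ, if u j' = a then 1 else 0 := by
        simp only [Finset.card_filter]
    _ = ∑ u ∈ multislice ℓ n κ, (Finset.univ.filter fun j' => u j' = a).card := by
        rw [Finset.sum_comm]; simp only [Finset.card_filter]
    _ = ∑ u ∈ multislice ℓ n κ, κ a :=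
        Finset.sum_congr rfl fun u hu => ms_count hu a
    _ = κ a * (multislice ℓ n κ).card := by simp [mul_comm]

lemma fiber2 {ℓ n : ℕ} {κ : Fin ℓ → ℕ} {j₁ j₂ : Fin n} (hj : j₁ ≠ j₂)
    {a b : Fin ℓ} (hab : a ≠ b) :
    (n - 1) * ((multislice ℓ n κ).filter fun u => u j₁ = a ∧ u j₂ = b).card
      = κ b * ((multislice ℓ n κ).filter fun u => u j₁ = a).card := by
  have key : ∀ j' ∈ Finset.univ.erase j₁,
      ((multislice ℓ n κ).filter fun u => u j₁ = a ∧ u j' = b).card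
      = ((multislice ℓ n κ).filter fun u => u j₁ = a ∧ u j₂ = b).card := by
    intro j' hj'
    have hj'1 : j' ≠ j₁ := (Finset.mem_erase.1 hj').1
    have h := card_ms_comp (κ := κ) (Equiv.swap j₂ j') (fun u => u j₁ = a ∧ u j₂ = b)
    simpa [Function.comp, Equiv.swap_apply_left,
      Equiv.swap_apply_of_ne_of_ne hj hj'1.symm] using h
  have hcard : (Finset.univ.erase j₁).card = n - 1 := by
    rw [Finset.card_erase_of_mem (Finset.mem_univ _), Finset.card_univ, Fintype.card_fin]
  calc (n - 1) * ((multislice ℓ n κ).filter fun u => u j₁ = a ∧ u j₂ = b).card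
      = ∑ j' ∈ Finset.univ.erase j₁,
          ((multislice ℓ n κ).filter fun u => u j₁ = a ∧ u j' = b).card := by
        rw [Finset.sum_congr rfl key, Finset.sum_const, hcard, smul_eq_mul]
    _ = ∑ j' ∈ Finset.univ.erase j₁, ∑ u ∈ multislice ℓ n κ,
          if u j₁ = a ∧ u j' = b then 1 else 0 := by
        simp only [Finset.card_filter]
    _ = ∑ u ∈ multislice ℓ n κ, ∑ j' ∈ Finset.univ.erase j₁,
          if u j₁ = a ∧ u j' = b then 1 else 0 := Finset.sum_comm
    _ = ∑ u ∈ multislice ℓ n κ, if u j₁ = a then κ b else 0 := by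
        refine Finset.sum_congr rfl fun u hu => ?_
        by_cases ha : u j₁ = a
        · simp only [ha, true_and, if_pos]
          rw [← Finset.card_filter]
          have he : (Finset.univ.erase j₁).filter (fun j' => u j' = b)
              = Finset.univ.filter (fun j' => u j' = b) := by
            rw [Finset.filter_erase]
            exact Finset.erase_eq_of_notMem (by simp [ha, hab])
          rw [he, ms_count hu b]
        · simp [ha]
    _ = κ b * ((multislice ℓ n κ).filter fun u => u j₁ = a).card := by
        rw [← Finset.sum_filter]
        simp [mul_comm]

lemma ms_nonempty {ℓ n : ℕ} {κ : Fin ℓ → ℕ} (hκ : ∑ i, κ i = n) :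
    (multislice ℓ n κ).Nonempty := by
  have hcard : Fintype.card (Σ i : Fin ℓ, Fin (κ i)) = Fintype.card (Fin n) := by
    simp [Fintype.card_sigma, hκ]
  let e : Fin n ≃ Σ i : Fin ℓ, Fin (κ i) := (Fintype.equivOfCardEq hcard).symm
  refine ⟨fun j => (e j).1, ?_⟩
  simp only [multislice, mem_filter, mem_univ, true_and]
  intro i
  have : (Finset.univ.filter fun j => (e j).1 = i).card
      = (Finset.univ.filter fun s : Σ i : Fin ℓ, Fin (κ i) => s.1 = i).card :=
    Finset.card_equiv e (by simp)
  rw [this]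
  rw [Finset.card_filter]
  rw [← Finset.univ_sigma_univ, Finset.sum_sigma]
  simp [Finset.card_filter, apply_ite (Finset.card), Finset.sum_ite_eq]

lemma dist01_nonneg (x : ℝ) : 0 ≤ dist01 x := le_min (abs_nonneg _) (abs_nonneg _)

lemma distPM1_nonneg (x : ℝ) : 0 ≤ distPM1 x :=
  le_min (abs_nonneg _) (le_min (abs_nonneg _) (abs_nonneg _))

lemma distPM1_le_sub {x t : ℝ} (ht : t = 0 ∨ t = 1 ∨ t = -1) : distPM1 x ≤ |x - t| := by
  rcases ht with h | h | h <;> subst h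
  · simpa [distPM1] using min_le_left |x| (min |x-1| |x+1|)
  · exact le_trans (min_le_right _ _) (le_trans (min_le_left _ _) (by norm_num))
  · refine le_trans (min_le_right _ _) (le_trans (min_le_right _ _) ?_)
    apply le_of_eq; ring_nf

lemma distPM1_sub_le (a b : ℝ) : distPM1 (a - b) ≤ dist01 a + dist01 b := by
  rcases le_total |a| |a-1| with ha | ha <;> rcases le_total |b| |b-1| with hb | hb
  · calc distPM1 (a-b) ≤ |(a-b) - 0| := distPM1_le_sub (Or.inl rfl)
      _ = |a - b| := by norm_num
      _ ≤ |a| + |b| := by rw [sub_eq_add_neg]; exact (abs_add_le _ _).trans (by rw [abs_neg])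
      _ = dist01 a + dist01 b := by rw [dist01, dist01, min_eq_left ha, min_eq_left hb]
  · calc distPM1 (a-b) ≤ |(a-b) - (-1)| := distPM1_le_sub (Or.inr (Or.inr rfl))
      _ = |a - (b-1)| := by ring_nf
      _ ≤ |a| + |b-1| := by
          have : a - (b-1) = a + (-(b-1)) := by ring
          rw [this]; exact (abs_add_le _ _).trans (by rw [abs_neg])
      _ = dist01 a + dist01 b := by rw [dist01, dist01, min_eq_left ha, min_eq_right hb]
  · calc distPM1 (a-b) ≤ |(a-b) - 1| := distPM1_le_sub (Or.inr (Or.inl rfl))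
      _ = |(a-1) - b| := by ring_nf
      _ ≤ |a-1| + |b| := by
          have : (a-1) - b = (a-1) + (-b) := by ring
          rw [this]; exact (abs_add_le _ _).trans (by rw [abs_neg])
      _ = dist01 a + dist01 b := by rw [dist01, dist01, min_eq_right ha, min_eq_left hb]
  · calc distPM1 (a-b) ≤ |(a-b) - 0| := distPM1_le_sub (Or.inl rfl)
      _ = |(a-1) - (b-1)| := by ring_nf
      _ ≤ |a-1| + |b-1| := by
          have : (a-1) - (b-1) = (a-1) + (-(b-1)) := by ring
          rw [this]; exact (abs_add_le _ _).trans (by rw [abs_neg])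
      _ = dist01 a + dist01 b := by rw [dist01, dist01, min_eq_right ha, min_eq_right hb]

lemma inner_xvar_sum {ℓ n : ℕ} (coef : Fin n → Fin ℓ → ℝ) (u : Fin n → Fin ℓ) (j : Fin n) :
    ∑ i, coef j i * xvar ℓ n j i u = coef j (u j) := by
  simp [xvar, mul_ite, Finset.sum_ite_eq]

set_option maxHeartbeats 1600000 in
/-- If `f = c + ∑_j ∑_{i<ℓ-1} c_{ji} x_{ji}` (variables of the last colour eliminated) is
`ε`-close to Boolean on a `ρ`-balanced multislice, then all the coefficient differences
`c_{j₁i} - c_{j₂i}` are `C√ε`-close to `{-1,0,1}`. -/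
theorem coef_differences_near_integers (ℓ : ℕ) (hℓ : 2 ≤ ℓ) (ρ : ℝ) (hρ : 0 < ρ) :
    ∃ C : ℝ, ∀ n : ℕ, 2 ≤ n → ∀ κ : Fin ℓ → ℕ,
      (∀ i, 0 < κ i) → (∀ i, ρ * n ≤ (κ i : ℝ)) → (∑ i, κ i = n) →
      ∀ (f : (Fin n → Fin ℓ) → ℝ) (c : ℝ) (coef : Fin n → Fin ℓ → ℝ),
      (∀ j, coef j ⟨ℓ - 1, by omega⟩ = 0) →
      (∀ u ∈ multislice ℓ n κ, f u = c + ∑ j, ∑ i, coef j i * xvar ℓ n j i u) →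
      ∀ ε : ℝ, msExp ℓ n κ (fun u => dist01 (f u) ^ 2) = ε →
      ∀ j₁ j₂ : Fin n, j₁ ≠ j₂ → ∀ i : Fin ℓ, (i : ℕ) < ℓ - 1 →
        distPM1 (coef j₁ i - coef j₂ i) ≤ C * Real.sqrt ε := by
  refine ⟨2 / ρ, ?_⟩
  intro n hn κ hκpos hκρ hκsum f c coef hlast hf ε hε j₁ j₂ hj12 i hi
  set i₀ : Fin ℓ := ⟨ℓ - 1, by omega⟩ with hi₀
  have hii₀ : i₀ ≠ i := by
    intro h
    apply absurd (congrArg Fin.val h)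
    simp only [hi₀]
    omega
  set σ : Equiv.Perm (Fin n) := Equiv.swap j₁ j₂ with hσ
  set d : ℝ := distPM1 (coef j₁ i - coef j₂ i) with hd
  -- M is nonempty
  have hMne : (multislice ℓ n κ).Nonempty := ms_nonempty hκsum
  have hMpos : (0 : ℝ) < ((multislice ℓ n κ).card : ℝ) := by
    exact_mod_cast Finset.card_pos.2 hMne
  -- counting
  have h2 := fiber2 (κ := κ) (j₁ := j₂) (j₂ := j₁) hj12.symm (a := i₀) (b := i) hii₀
  have h1 := fiber1 (κ := κ) j₂ i₀
  have hcount : n * ((n - 1) *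
      ((multislice ℓ n κ).filter fun u => u j₂ = i₀ ∧ u j₁ = i).card)
      = κ i₀ * (κ i * (multislice ℓ n κ).card) := by
    rw [h2, ← mul_assoc, mul_comm (n : ℕ) (κ i), mul_assoc, h1, ← mul_assoc,
      mul_comm (κ i) (κ i₀), mul_assoc]
  have hn1 : ((n - 1 : ℕ) : ℝ) = (n : ℝ) - 1 := by
    have hone : 1 ≤ n := Nat.le_of_lt hn
    rw [Nat.cast_sub hone]
    norm_num
  have hnR : (2 : ℝ) ≤ (n : ℝ) := by exact_mod_cast hn
  set Bc : ℕ := ((multislice ℓ n κ).filter fun u => u j₂ = i₀ ∧ u j₁ = i).card with hBc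
  have hcountR : (n : ℝ) * (((n : ℝ) - 1) * (Bc : ℝ))
      = (κ i₀ : ℝ) * ((κ i : ℝ) * ((multislice ℓ n κ).card : ℝ)) := by
    have h := congrArg (fun k : ℕ => (k : ℝ)) hcount
    simp only [Nat.cast_mul] at h
    rw [hn1] at h
    exact h
  have hρn : ρ * n ≤ (κ i : ℝ) := hκρ i
  have hρn₀ : ρ * n ≤ (κ i₀ : ℝ) := hκρ i₀
  have hBge : ρ ^ 2 * ((multislice ℓ n κ).card : ℝ) ≤ (Bc : ℝ) := by
    have hm : (0:ℝ) ≤ ((multislice ℓ n κ).card : ℝ) := hMpos.le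
    have hnn : (0:ℝ) ≤ (n:ℝ) := by positivity
    have hκκ : ρ ^ 2 * ((n:ℝ) * (n:ℝ)) ≤ (κ i₀ : ℝ) * (κ i : ℝ) := by
      have hρnn : (0:ℝ) ≤ ρ * n := mul_nonneg hρ.le hnn
      have hmul := mul_le_mul hρn₀ hρn hρnn ((Nat.cast_nonneg (κ i₀)) : (0:ℝ) ≤ (κ i₀ : ℝ))
      nlinarith [hmul]
    have hA1 : ρ ^ 2 * ((n:ℝ) * (n:ℝ)) * ((multislice ℓ n κ).card : ℝ)
        ≤ (κ i₀ : ℝ) * ((κ i : ℝ) * ((multislice ℓ n κ).card : ℝ)) := by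
      calc ρ ^ 2 * ((n:ℝ) * (n:ℝ)) * ((multislice ℓ n κ).card : ℝ)
          ≤ ((κ i₀ : ℝ) * (κ i : ℝ)) * ((multislice ℓ n κ).card : ℝ) :=
            mul_le_mul_of_nonneg_right hκκ hm
        _ = (κ i₀ : ℝ) * ((κ i : ℝ) * ((multislice ℓ n κ).card : ℝ)) := by ring
    have hposn : (0:ℝ) < (n:ℝ) * ((n:ℝ) - 1) := by nlinarith [hnR]
    have hfin : ρ ^ 2 * ((multislice ℓ n κ).card : ℝ) * ((n:ℝ) * ((n:ℝ) - 1))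
        ≤ (Bc : ℝ) * ((n:ℝ) * ((n:ℝ) - 1)) := by
      have hmono : (0:ℝ) ≤ ρ ^ 2 * ((multislice ℓ n κ).card : ℝ) * (n:ℝ) := by positivity
      nlinarith [hA1, hcountR, hmono]
    exact le_of_mul_le_mul_right hfin hposn
  -- transport lemmas via the swap
  have hsum2 := sum_ms_comp (κ := κ) σ (fun v => v j₂ = i₀ ∧ v j₁ = i)
    (fun v => dist01 (f v) ^ 2)
  have hcard2 := card_ms_comp (κ := κ) σ (fun v => v j₂ = i₀ ∧ v j₁ = i)
  -- the set A
  set A : Finset (Fin n → Fin ℓ) :=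
    (multislice ℓ n κ).filter (fun u => (u ∘ σ) j₂ = i₀ ∧ (u ∘ σ) j₁ = i) with hA
  have hAcard : (A.card : ℝ) = (Bc : ℝ) := by exact_mod_cast hcard2
  -- pointwise identity
  have hpoint : ∀ u ∈ A, coef j₁ i - coef j₂ i = f (u ∘ σ) - f u := by
    intro u hu
    have huM : u ∈ multislice ℓ n κ := (Finset.mem_filter.1 hu).1
    have hup := (Finset.mem_filter.1 hu).2
    have h1' : u j₁ = i₀ := by
      have := hup.1
      rwa [Function.comp_apply, hσ, Equiv.swap_apply_right] at this
    have h2' : u j₂ = i := by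
      have := hup.2
      rwa [Function.comp_apply, hσ, Equiv.swap_apply_left] at this
    have hvM : u ∘ σ ∈ multislice ℓ n κ := mem_ms_comp σ huM
    rw [hf u huM, hf (u ∘ σ) hvM]
    have hs1 : ∀ w : Fin n → Fin ℓ, ∑ j, ∑ i', coef j i' * xvar ℓ n j i' w
        = ∑ j, coef j (w j) :=
      fun w => Finset.sum_congr rfl fun j _ => inner_xvar_sum coef w j
    rw [hs1, hs1]
    have : ∑ j, coef j ((u ∘ σ) j) - ∑ j, coef j (u j)
        = ∑ j, (coef j ((u ∘ σ) j) - coef j (u j)) := by rw [Finset.sum_sub_distrib]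
    rw [add_sub_add_left_eq_sub, this]
    have hzero : ∀ j ∈ Finset.univ, j ∉ ({j₁, j₂} : Finset (Fin n)) →
        coef j ((u ∘ σ) j) - coef j (u j) = 0 := by
      intro j _ hj
      simp only [Finset.mem_insert, Finset.mem_singleton, not_or] at hj
      rw [Function.comp_apply, hσ, Equiv.swap_apply_of_ne_of_ne hj.1 hj.2, sub_self]
    rw [← Finset.sum_subset (Finset.subset_univ ({j₁, j₂} : Finset (Fin n))) hzero,
      Finset.sum_pair hj12]
    rw [Function.comp_apply, Function.comp_apply, hσ, Equiv.swap_apply_left,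
      Equiv.swap_apply_right, h1', h2', hlast j₁, hlast j₂]
    ring
  -- expectation facts
  set S : ℝ := ∑ u ∈ multislice ℓ n κ, dist01 (f u) ^ 2 with hS
  have hS0 : 0 ≤ S := Finset.sum_nonneg fun u _ => sq_nonneg _
  have hSε : S = ε * ((multislice ℓ n κ).card : ℝ) := by
    rw [← hε, msExp, div_mul_cancel₀ _ (ne_of_gt hMpos)]
  have hε0 : 0 ≤ ε := by
    by_contra hcon
    push_neg at hcon
    nlinarith [hS0, hSε, hMpos]
  -- summing the pointwise inequality
  have hsubA : ∑ u ∈ A, dist01 (f u) ^ 2 ≤ S :=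
    Finset.sum_le_sum_of_subset_of_nonneg (Finset.filter_subset _ _)
      (fun u _ _ => sq_nonneg _)
  have hsubB : ∑ u ∈ A, dist01 (f (u ∘ σ)) ^ 2 ≤ S := by
    rw [hA]
    rw [hsum2]
    exact Finset.sum_le_sum_of_subset_of_nonneg (Finset.filter_subset _ _)
      (fun u _ _ => sq_nonneg _)
  have hkey : (A.card : ℝ) * d ^ 2 ≤ 4 * S := by
    have hpt : ∀ u ∈ A, d ^ 2 ≤ 2 * (dist01 (f (u ∘ σ)) ^ 2 + dist01 (f u) ^ 2) := by
      intro u hu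
      have h := distPM1_sub_le (f (u ∘ σ)) (f u)
      rw [← hpoint u hu, ← hd] at h
      have hd0' : 0 ≤ d := by rw [hd]; exact distPM1_nonneg _
      nlinarith [dist01_nonneg (f (u ∘ σ)), dist01_nonneg (f u), hd0', h,
        sq_nonneg (dist01 (f (u ∘ σ)) - dist01 (f u))]
    calc (A.card : ℝ) * d ^ 2 = ∑ _u ∈ A, d ^ 2 := by
          rw [Finset.sum_const, nsmul_eq_mul]
      _ ≤ ∑ u ∈ A, 2 * (dist01 (f (u ∘ σ)) ^ 2 + dist01 (f u) ^ 2) :=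
          Finset.sum_le_sum hpt
      _ = 2 * (∑ u ∈ A, dist01 (f (u ∘ σ)) ^ 2) + 2 * (∑ u ∈ A, dist01 (f u) ^ 2) := by
          rw [← Finset.mul_sum, Finset.sum_add_distrib]
          ring
      _ ≤ 2 * S + 2 * S := by
          have := hsubB
          have := hsubA
          nlinarith
      _ = 4 * S := by ring
  -- put everything together
  have hd0 : 0 ≤ d := by rw [hd]; exact distPM1_nonneg _
  have hfinal : ρ ^ 2 * d ^ 2 ≤ 4 * ε := by
    have hle : (ρ ^ 2 * ((multislice ℓ n κ).card : ℝ)) ≤ (A.card : ℝ) := by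
      rw [hAcard]; exact hBge
    have h1'' : ρ ^ 2 * ((multislice ℓ n κ).card : ℝ) * d ^ 2 ≤ (A.card : ℝ) * d ^ 2 :=
      mul_le_mul_of_nonneg_right hle (sq_nonneg d)
    have h3'' : (4 : ℝ) * S = 4 * ε * ((multislice ℓ n κ).card : ℝ) := by
      rw [hSε]; ring
    have h2'' : ρ ^ 2 * ((multislice ℓ n κ).card : ℝ) * d ^ 2
        ≤ 4 * ε * ((multislice ℓ n κ).card : ℝ) := by
      rw [← h3'']
      exact le_trans h1'' hkey
    nlinarith [hMpos, h2'']
  have hrhs : 0 ≤ 2 / ρ * Real.sqrt ε := by positivity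
  have hd2 : d ^ 2 ≤ (2 / ρ * Real.sqrt ε) ^ 2 := by
    have hsq : (2 / ρ * Real.sqrt ε) ^ 2 = 4 / ρ ^ 2 * ε := by
      rw [mul_pow, Real.sq_sqrt hε0]
      ring
    rw [hsq, div_mul_eq_mul_div, le_div_iff₀ (by positivity : (0:ℝ) < ρ ^ 2)]
    nlinarith [hfinal]
  calc d = Real.sqrt (d ^ 2) := (Real.sqrt_sq hd0).symm
    _ ≤ Real.sqrt ((2 / ρ * Real.sqrt ε) ^ 2) := Real.sqrt_le_sqrt hd2
    _ = 2 / ρ * Real.sqrt ε := Real.sqrt_sq hrhs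
end
end

section
/- Let n ≥ 4 and for a partition λ of n define c_λ = (1/(n(n−1))) Σ_{i≥1} [λ_i² − (2i−1)λ_i]. Then c_{(n)} = 1, c_{(n−1,1)} = 1 − 2/(n−1), and for every partition λ of n other than (n) and (n−1,1) we have c_λ ≤ 1 − 4/n. -/
open Finset

noncomputable section

/-- The eigenvalue `c_λ = (1/(n(n-1))) ∑_i [λ_i² - (2i-1) λ_i]` associated with a partition `λ`
of `n`, where `λ_1 ≥ λ_2 ≥ ⋯` are the parts in non-increasing order. -/
def frobeniusEigenvalue (n : ℕ) (p : Nat.Partition n) : ℝ :=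
  (1 / ((n : ℝ) * ((n : ℝ) - 1))) *
    ∑ i ∈ Finset.range (p.parts.sort (· ≥ ·)).length,
      (((p.parts.sort (· ≥ ·)).getD i 0 : ℝ) ^ 2
        - (2 * (i : ℝ) + 1) * ((p.parts.sort (· ≥ ·)).getD i 0 : ℝ))

def gAux : List ℕ → ℤ
  | [] => 0
  | a :: t => (a : ℤ) ^ 2 - (a : ℤ) + gAux t - 2 * (t.sum : ℤ)

lemma sum_getD_real (l : List ℕ) :
    ∑ i ∈ Finset.range l.length, (l.getD i 0 : ℝ) = (l.sum : ℝ) := by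
  induction l with
  | nil => simp
  | cons a t ih =>
    rw [List.length_cons, Finset.sum_range_succ']
    simp only [List.getD_cons_succ, List.getD_cons_zero]
    rw [ih, List.sum_cons, Nat.cast_add]
    ring

lemma sum_eq_gAux (l : List ℕ) :
    ∑ i ∈ Finset.range l.length,
      ((l.getD i 0 : ℝ) ^ 2 - (2 * (i : ℝ) + 1) * (l.getD i 0 : ℝ)) = (gAux l : ℝ) := by
  induction l with
  | nil => simp [gAux]
  | cons a t ih =>
    rw [List.length_cons, Finset.sum_range_succ']
    simp only [List.getD_cons_succ, List.getD_cons_zero]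
    have h : ∀ i : ℕ, (t.getD i 0 : ℝ) ^ 2 - (2 * ((i : ℝ) + 1) + 1) * (t.getD i 0 : ℝ)
        = ((t.getD i 0 : ℝ) ^ 2 - (2 * (i : ℝ) + 1) * (t.getD i 0 : ℝ)) - 2 * (t.getD i 0) := by
      intro i; ring
    push_cast [-Nat.cast_list_sum]
    calc (∑ i ∈ Finset.range t.length,
          ((t.getD i 0 : ℝ) ^ 2 - (2 * ((i : ℝ) + 1) + 1) * (t.getD i 0 : ℝ)))
          + ((a : ℝ) ^ 2 - (2 * (0:ℝ) + 1) * a)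
        = (∑ i ∈ Finset.range t.length,
            (((t.getD i 0 : ℝ) ^ 2 - (2 * (i : ℝ) + 1) * (t.getD i 0 : ℝ))
              - 2 * (t.getD i 0 : ℝ))) + ((a : ℝ) ^ 2 - a) := by
          congr 1
          · exact Finset.sum_congr rfl fun i _ => h i
          · ring
      _ = (gAux t : ℝ) - 2 * (t.sum : ℝ) + ((a : ℝ) ^ 2 - a) := by
          rw [Finset.sum_sub_distrib, ih, ← Finset.mul_sum, sum_getD_real]
      _ = ((gAux (a :: t) : ℤ) : ℝ) := by
          show _ = (((a : ℤ) ^ 2 - (a : ℤ) + gAux t - 2 * (t.sum : ℤ) : ℤ) : ℝ)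
          push_cast [-Nat.cast_list_sum]
          ring

lemma gAux_le (l : List ℕ) : gAux l ≤ (l.sum : ℤ) ^ 2 - (l.sum : ℤ) := by
  induction l with
  | nil => simp [gAux]
  | cons a t ih =>
    simp only [gAux, List.sum_cons, Nat.cast_add]
    have ha : (0:ℤ) ≤ (a:ℤ) := Int.natCast_nonneg a
    have hs : (0:ℤ) ≤ (t.sum:ℤ) := Int.natCast_nonneg _
    nlinarith [ih]

lemma gAux_main (n : ℕ) (hn : 4 ≤ n) (l : List ℕ) (hsum : l.sum = n)
    (hpos : ∀ x ∈ l, 0 < x)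
    (h1 : (l : Multiset ℕ) ≠ {n}) (h2 : (l : Multiset ℕ) ≠ {n - 1, 1}) :
    gAux l ≤ ((n : ℤ) - 1) * ((n : ℤ) - 4) := by
  match l with
  | [] => simp at hsum; omega
  | a :: t =>
    have hts : a + t.sum = n := by simpa using hsum
    have hapos : 0 < a := hpos a (by simp)
    rcases (by omega : a = n ∨ a = n - 1 ∨ a + 2 ≤ n) with h | h | h
    · have ht0 : t.sum = 0 := by omega
      have ht : t = [] := by
        cases t with
        | nil => rfl
        | cons b u =>
          have := hpos b (by simp)
          simp [List.sum_cons] at ht0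
          omega
      subst ht h
      exact absurd (by simp) h1
    · have ht1 : t.sum = 1 := by omega
      have ht : t = [1] := by
        cases t with
        | nil => exact absurd ht1 (by simp)
        | cons b u =>
          have hb := hpos b (by simp)
          simp [List.sum_cons] at ht1
          have hb1 : b = 1 := by omega
          have hu : u.sum = 0 := by omega
          cases u with
          | nil => simp [hb1]
          | cons c v =>
            have := hpos c (by simp)
            simp [List.sum_cons] at hu
            omega
      subst ht h
      exact absurd (by simp [Multiset.insert_eq_cons]; rfl) h2
    · have key := gAux_le t
      simp only [gAux]
      have hs : (t.sum : ℤ) = (n : ℤ) - a := by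
        have h' : t.sum = n - a := by omega
        rw [h']; push_cast [Nat.cast_sub (by omega : a ≤ n), -Nat.cast_list_sum]; ring
      have ha1 : (1:ℤ) ≤ (a:ℤ) := by exact_mod_cast hapos
      have ha2 : (a:ℤ) + 2 ≤ (n:ℤ) := by exact_mod_cast h
      nlinarith [key]

lemma frob_eq (n : ℕ) (p : Nat.Partition n) :
    frobeniusEigenvalue n p
      = (1 / ((n : ℝ) * ((n : ℝ) - 1))) * ((gAux (p.parts.sort (· ≥ ·)) : ℤ) : ℝ) := by
  rw [frobeniusEigenvalue, sum_eq_gAux]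

/-- `c_{(n)} = 1`, `c_{(n-1,1)} = 1 - 2/(n-1)`, and `c_λ ≤ 1 - 4/n` for every other
partition `λ` of `n ≥ 4`. -/
theorem frobeniusEigenvalue_extreme (n : ℕ) (hn : 4 ≤ n) :
    (∀ p : Nat.Partition n, p.parts = {n} → frobeniusEigenvalue n p = 1) ∧
    (∀ p : Nat.Partition n, p.parts = {n - 1, 1} →
      frobeniusEigenvalue n p = 1 - 2 / ((n : ℝ) - 1)) ∧
    (∀ p : Nat.Partition n, p.parts ≠ {n} → p.parts ≠ {n - 1, 1} →
      frobeniusEigenvalue n p ≤ 1 - 4 / (n : ℝ)) := by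
  have hn4 : (4:ℝ) ≤ (n:ℝ) := by exact_mod_cast hn
  have hn0 : (0:ℝ) < (n:ℝ) := by linarith
  have hn1 : (0:ℝ) < (n:ℝ) - 1 := by linarith
  refine ⟨?_, ?_, ?_⟩
  · intro p hp
    have hsort : p.parts.sort (· ≥ ·) = [n] := by
      have hperm : List.Perm (p.parts.sort (· ≥ ·)) [n] := by
        rw [← Multiset.coe_eq_coe]
        rw [Multiset.sort_eq, hp]
        rfl
      exact List.perm_singleton.mp hperm
    rw [frob_eq, hsort]
    simp only [gAux, List.sum_nil, Nat.cast_zero]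
    push_cast
    field_simp
    ring
  · intro p hp
    have hsort : p.parts.sort (· ≥ ·) = [n - 1, 1] := by
      refine (fun hp h1 h2 => List.Perm.eq_of_pairwise' (r := (· ≥ ·)) h1 h2 hp) ?_ ?_ ?_
      · rw [← Multiset.coe_eq_coe, Multiset.sort_eq, hp]
        simp [Multiset.insert_eq_cons]
        rfl
      · exact Multiset.pairwise_sort _ _
      · simp [List.pairwise_cons]
        omega
    rw [frob_eq, hsort]
    simp only [gAux, List.sum_nil, List.sum_cons, List.sum_singleton]
    push_cast [Nat.cast_sub (by omega : 1 ≤ n)]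
    field_simp
    ring
  · intro p hp1 hp2
    set L := p.parts.sort (· ≥ ·) with hL
    have hcoe : (L : Multiset ℕ) = p.parts := Multiset.sort_eq _ _
    have hsum : L.sum = n := by
      have := p.parts_sum
      rw [← hcoe] at this
      simpa using this
    have hpos : ∀ x ∈ L, 0 < x := by
      intro x hx
      apply p.parts_pos
      rw [← hcoe]
      exact_mod_cast hx
    have hmain := gAux_main n hn L hsum hpos (by rw [hcoe]; exact hp1) (by rw [hcoe]; exact hp2)
    rw [frob_eq]
    have hcast : ((gAux L : ℤ) : ℝ) ≤ ((n:ℝ) - 1) * ((n:ℝ) - 4) := by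
      calc ((gAux L : ℤ) : ℝ) ≤ ((((n : ℤ) - 1) * ((n : ℤ) - 4) : ℤ) : ℝ) := by
            exact_mod_cast hmain
        _ = ((n:ℝ) - 1) * ((n:ℝ) - 4) := by push_cast; ring
    calc (1 / ((n : ℝ) * ((n : ℝ) - 1))) * ((gAux L : ℤ) : ℝ)
        ≤ (1 / ((n : ℝ) * ((n : ℝ) - 1))) * (((n:ℝ) - 1) * ((n:ℝ) - 4)) := by
          apply mul_le_mul_of_nonneg_left hcast
          positivity
      _ = 1 - 4 / (n : ℝ) := by field_simp
end
end
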